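/- Let X be a Hausdorff space and let Y be a nonempty, compact, zero-dimensional, closed subset of X. Then the family { ⟨𝒱⟩ : 𝒱 is a finite cellular family in X and Y ∈ ⟨𝒱⟩ } is a local base for CL(X) at Y. -/
import Mathlib


open Set Topology

/-- The hyperspace of nonempty closed subsets of a topological space `X`. -/
structure CL (X : Type*) [TopologicalSpace X] : Type _ where
  carrier : Set X
  isClosed' : IsClosed carrier
  nonempty' : carrier.Nonempty

/-- The basic Vietoris set `⟨𝒰⟩` determined by a finite family `𝒰` of subsets of `X`:
all nonempty closed sets contained in `⋃ 𝒰` and meeting every member of `𝒰`. -/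
def CL.box {X : Type*} [TopologicalSpace X] (𝒰 : Finset (Set X)) : Set (CL X) :=
  {A | A.carrier ⊆ ⋃₀ (𝒰 : Set (Set X)) ∧ ∀ U ∈ 𝒰, (A.carrier ∩ U).Nonempty}

/-- The Vietoris topology on `CL X`, generated by the sets `⟨𝒰⟩` where `𝒰` ranges over
finite families of open subsets of `X`. -/
instance CL.instTopologicalSpace (X : Type*) [TopologicalSpace X] :
    TopologicalSpace (CL X) :=
  TopologicalSpace.generateFrom
    {s | ∃ 𝒰 : Finset (Set X), (∀ U ∈ 𝒰, IsOpen U) ∧ s = CL.box 𝒰}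

/-- `p` is the limit of the set `S`: `p ∈ S` and `S \ U` is finite for every open
set `U` containing `p`. -/
def IsLimitOf {X : Type*} [TopologicalSpace X] (S : Set X) (p : X) : Prop :=
  p ∈ S ∧ ∀ U : Set X, IsOpen U → p ∈ U → (S \ U).Finite

/-- `S` is a nontrivial convergent sequence in `X`: a countably infinite set having
a limit point belonging to it. -/
def IsNontrivialConvergentSeq {X : Type*} [TopologicalSpace X] (S : Set X) : Prop :=
  S.Countable ∧ S.Infinite ∧ ∃ p, IsLimitOf S p

/-- The hyperspace `S_c(X)` of nontrivial convergent sequences in `X`, as a subset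
of `CL X` (with the subspace Vietoris topology). -/
def Sc (X : Type*) [TopologicalSpace X] : Set (CL X) :=
  {A | IsNontrivialConvergentSeq A.carrier}

/-- A finite cellular family in `X`: a finite pairwise disjoint family of nonempty
open subsets of `X`. -/
def IsCellular {X : Type*} [TopologicalSpace X] (𝒱 : Finset (Set X)) : Prop :=
  (∀ U ∈ 𝒱, IsOpen U ∧ U.Nonempty) ∧ (𝒱 : Set (Set X)).Pairwise Disjoint

section Aux
variable {X : Type*} [TopologicalSpace X]


lemma box_isOpen (𝒰 : Finset (Set X)) (h : ∀ U ∈ 𝒰, IsOpen U) : IsOpen (CL.box 𝒰) :=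
  TopologicalSpace.isOpen_generateFrom_of_mem ⟨𝒰, h, rfl⟩

lemma box_inter {𝒰 𝒱 : Finset (Set X)} {Y : CL X}
    (hU : Y ∈ CL.box 𝒰) (hV : Y ∈ CL.box 𝒱)
    (hUo : ∀ U ∈ 𝒰, IsOpen U) (hVo : ∀ V ∈ 𝒱, IsOpen V) :
    ∃ 𝒲 : Finset (Set X), (∀ W ∈ 𝒲, IsOpen W) ∧
      Y ∈ CL.box 𝒲 ∧ CL.box 𝒲 ⊆ CL.box 𝒰 ∩ CL.box 𝒱 := by
  classical
  refine ⟨𝒰.image (· ∩ ⋃₀ ↑𝒱) ∪ 𝒱.image (· ∩ ⋃₀ ↑𝒰), ?_, ?_, ?_⟩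
  · intro W hW
    simp only [Finset.mem_union, Finset.mem_image] at hW
    have h1 : IsOpen (⋃₀ (𝒱 : Set (Set X))) := isOpen_sUnion (by simpa using hVo)
    have h2 : IsOpen (⋃₀ (𝒰 : Set (Set X))) := isOpen_sUnion (by simpa using hUo)
    rcases hW with ⟨U, hU', rfl⟩ | ⟨V, hV', rfl⟩
    · exact (hUo U hU').inter h1
    · exact (hVo V hV').inter h2
  · constructor
    · intro x hx
      obtain ⟨U, hU', hxU⟩ := hU.1 hx
      refine ⟨U ∩ ⋃₀ ↑𝒱, ?_, hxU, hV.1 hx⟩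
      simp only [Finset.coe_union, Finset.coe_image, mem_union, mem_image]
      exact Or.inl ⟨U, hU', rfl⟩
    · intro W hW
      simp only [Finset.mem_union, Finset.mem_image] at hW
      rcases hW with ⟨U, hU', rfl⟩ | ⟨V, hV', rfl⟩
      · obtain ⟨x, hx⟩ := hU.2 U hU'
        exact ⟨x, hx.1, hx.2, hV.1 hx.1⟩
      · obtain ⟨x, hx⟩ := hV.2 V hV'
        exact ⟨x, hx.1, hx.2, hU.1 hx.1⟩
  · rintro A ⟨hsub, hmeet⟩
    have hsU : A.carrier ⊆ ⋃₀ (𝒰 : Set (Set X)) := by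
      intro x hx
      obtain ⟨W, hW, hxW⟩ := hsub hx
      simp only [Finset.coe_union, Finset.coe_image, mem_union, mem_image] at hW
      rcases hW with ⟨U, hU', rfl⟩ | ⟨V, hV', rfl⟩
      · exact ⟨U, hU', hxW.1⟩
      · exact hxW.2
    have hsV : A.carrier ⊆ ⋃₀ (𝒱 : Set (Set X)) := by
      intro x hx
      obtain ⟨W, hW, hxW⟩ := hsub hx
      simp only [Finset.coe_union, Finset.coe_image, mem_union, mem_image] at hW
      rcases hW with ⟨U, hU', rfl⟩ | ⟨V, hV', rfl⟩
      · exact hxW.2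
      · exact ⟨V, hV', hxW.1⟩
    refine ⟨⟨hsU, ?_⟩, ⟨hsV, ?_⟩⟩
    · intro U hU'
      obtain ⟨x, hx⟩ := hmeet (U ∩ ⋃₀ ↑𝒱) (by
        simp only [Finset.mem_union, Finset.mem_image]; exact Or.inl ⟨U, hU', rfl⟩)
      exact ⟨x, hx.1, hx.2.1⟩
    · intro V hV'
      obtain ⟨x, hx⟩ := hmeet (V ∩ ⋃₀ ↑𝒰) (by
        simp only [Finset.mem_union, Finset.mem_image]; exact Or.inr ⟨V, hV', rfl⟩)
      exact ⟨x, hx.1, hx.2.1⟩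

lemma exists_box_of_mem_nhds {Y : CL X} {t : Set (CL X)} (ht : t ∈ 𝓝 Y) :
    ∃ 𝒰 : Finset (Set X), (∀ U ∈ 𝒰, IsOpen U) ∧ Y ∈ CL.box 𝒰 ∧ CL.box 𝒰 ⊆ t := by
  obtain ⟨s, hst, hso, hYs⟩ := mem_nhds_iff.mp ht
  have hgen : TopologicalSpace.GenerateOpen
      {s | ∃ 𝒰 : Finset (Set X), (∀ U ∈ 𝒰, IsOpen U) ∧ s = CL.box 𝒰} s := hso
  clear hso ht
  suffices h : ∃ 𝒰 : Finset (Set X), (∀ U ∈ 𝒰, IsOpen U) ∧ Y ∈ CL.box 𝒰 ∧ CL.box 𝒰 ⊆ s by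
    obtain ⟨𝒰, h1, h2, h3⟩ := h
    exact ⟨𝒰, h1, h2, h3.trans hst⟩
  clear hst t
  induction hgen with
  | basic u hu =>
      obtain ⟨𝒰, h𝒰, rfl⟩ := hu
      exact ⟨𝒰, h𝒰, hYs, subset_rfl⟩
  | univ =>
      exact ⟨{Set.univ}, by simp, ⟨by simp, by simp [Y.nonempty']⟩, fun A _ => trivial⟩
  | inter u v hu hv ihu ihv =>
      obtain ⟨𝒰, h𝒰o, h𝒰Y, h𝒰s⟩ := ihu hYs.1
      obtain ⟨𝒱, h𝒱o, h𝒱Y, h𝒱s⟩ := ihv hYs.2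
      obtain ⟨𝒲, h𝒲o, h𝒲Y, h𝒲s⟩ := box_inter h𝒰Y h𝒱Y h𝒰o h𝒱o
      exact ⟨𝒲, h𝒲o, h𝒲Y, fun A hA => ⟨h𝒰s (h𝒲s hA).1, h𝒱s (h𝒲s hA).2⟩⟩
  | sUnion S hS ih =>
      obtain ⟨u, huS, hYu⟩ := hYs
      obtain ⟨𝒰, h1, h2, h3⟩ := ih u huS hYu
      exact ⟨𝒰, h1, h2, fun A hA => ⟨u, huS, h3 hA⟩⟩

lemma cellular_refine [T2Space X] (Y : CL X) (hcomp : IsCompact Y.carrier)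
    (hzd : ∀ (y : Y.carrier) (U : Set Y.carrier), IsOpen U → y ∈ U →
      ∃ V : Set Y.carrier, IsClopen V ∧ y ∈ V ∧ V ⊆ U)
    {𝒰 : Finset (Set X)} (hop : ∀ U ∈ 𝒰, IsOpen U) (hY : Y ∈ CL.box 𝒰) :
    ∃ 𝒱 : Finset (Set X), IsCellular 𝒱 ∧ Y ∈ CL.box 𝒱 ∧ CL.box 𝒱 ⊆ CL.box 𝒰 := by
  classical
  set T := Y.carrier with hT
  haveI : CompactSpace ↥T := isCompact_iff_compactSpace.mp hcomp
  -- clopen sets around each point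
  have hCex : ∀ y : ↥T, ∃ C : Set ↥T, IsClopen C ∧ y ∈ C ∧
      ∃ U ∈ 𝒰, C ⊆ Subtype.val ⁻¹' U := by
    intro y
    obtain ⟨U, hU, hyU⟩ := hY.1 y.2
    obtain ⟨C, hC, hyC, hCU⟩ := hzd y (Subtype.val ⁻¹' U)
      ((hop U hU).preimage continuous_subtype_val) hyU
    exact ⟨C, hC, hyC, U, hU, hCU⟩
  choose C hCclopen hCmem hCsub using hCex
  -- a nonempty clopen set inside each U ∈ 𝒰
  have hDex : ∀ U : Set X, ∃ D : Set ↥T, U ∈ 𝒰 →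
      IsClopen D ∧ D.Nonempty ∧ D ⊆ Subtype.val ⁻¹' U := by
    intro U
    by_cases hU : U ∈ 𝒰
    · obtain ⟨x, hxT, hxU⟩ := hY.2 U hU
      obtain ⟨D, hD, hxD, hDU⟩ := hzd ⟨x, hxT⟩ (Subtype.val ⁻¹' U)
        ((hop U hU).preimage continuous_subtype_val) hxU
      exact ⟨D, fun _ => ⟨hD, ⟨⟨x, hxT⟩, hxD⟩, hDU⟩⟩
    · exact ⟨∅, fun h => absurd h hU⟩
  choose D hD using hDex
  -- finite subcover by the C y
  obtain ⟨F, hF⟩ := isCompact_univ.elim_finite_subcover C (fun y => (hCclopen y).2)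
    (fun z _ => mem_iUnion.mpr ⟨z, hCmem z⟩)
  set 𝒞 : Finset (Set ↥T) := F.image C ∪ 𝒰.image D with h𝒞
  have h𝒞clopen : ∀ E ∈ 𝒞, IsClopen E := by
    intro E hE
    simp only [h𝒞, Finset.mem_union, Finset.mem_image] at hE
    rcases hE with ⟨y, _, rfl⟩ | ⟨U, hU, rfl⟩
    · exact hCclopen y
    · exact (hD U hU).1
  have h𝒞sub : ∀ E ∈ 𝒞, ∃ U ∈ 𝒰, E ⊆ Subtype.val ⁻¹' U := by
    intro E hE
    simp only [h𝒞, Finset.mem_union, Finset.mem_image] at hE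
    rcases hE with ⟨y, _, rfl⟩ | ⟨U, hU, rfl⟩
    · exact hCsub y
    · exact ⟨U, hU, (hD U hU).2.2⟩
  -- atoms
  set A : ↥T → Set ↥T := fun y => ⋂ E ∈ 𝒞, if y ∈ E then E else Eᶜ with hA
  have hyA : ∀ y, y ∈ A y := by
    intro y
    simp only [hA, mem_iInter]
    intro E _
    split_ifs with h
    · exact h
    · exact h
  have hAclopen : ∀ y, IsClopen (A y) := by
    intro y
    have : ∀ E ∈ 𝒞, IsClopen (if y ∈ E then E else Eᶜ) := by
      intro E hE
      split_ifs
      · exact h𝒞clopen E hE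
      · exact (h𝒞clopen E hE).compl
    refine ⟨?_, ?_⟩
    · exact isClosed_biInter (fun E hE => (this E hE).1)
    · exact isOpen_biInter_finset (fun E hE => (this E hE).2)
  have hAeq : ∀ y z, z ∈ A y → A z = A y := by
    intro y z hz
    have key : ∀ E ∈ 𝒞, (z ∈ E ↔ y ∈ E) := by
      intro E hE
      have := mem_iInter₂.mp hz E hE
      split_ifs at this with h
      · exact ⟨fun _ => h, fun _ => this⟩
      · exact ⟨fun hz' => absurd hz' this, fun hy' => absurd hy' h⟩
    simp only [hA]
    apply iInter₂_congr
    intro E hE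
    rw [if_congr (key E hE) rfl rfl]
  have hAsub : ∀ y E, E ∈ 𝒞 → y ∈ E → A y ⊆ E := by
    intro y E hE hyE
    intro z hz
    have := mem_iInter₂.mp hz E hE
    rwa [if_pos hyE] at this
  have hAdisj : ∀ y z, A y ≠ A z → Disjoint (A y) (A z) := by
    intro y z hne
    rw [Set.disjoint_left]
    intro w hwy hwz
    exact hne ((hAeq y w hwy).symm.trans (hAeq z w hwz))
  -- finite subcover by atoms
  obtain ⟨G, hG⟩ := isCompact_univ.elim_finite_subcover A (fun y => (hAclopen y).2)
    (fun z _ => mem_iUnion.mpr ⟨z, hyA z⟩)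
  -- pieces in X
  set K : ↥T → Set X := fun y => Subtype.val '' A y with hK
  set 𝒦 : Finset (Set X) := G.image K with h𝒦
  have h𝒦compact : ∀ k ∈ 𝒦, IsCompact k := by
    intro k hk
    obtain ⟨y, _, rfl⟩ := Finset.mem_image.mp hk
    exact (((hAclopen y).1).isCompact).image continuous_subtype_val
  have h𝒦ne : ∀ k ∈ 𝒦, k.Nonempty := by
    intro k hk
    obtain ⟨y, _, rfl⟩ := Finset.mem_image.mp hk
    exact ⟨y.1, y, hyA y, rfl⟩
  have h𝒦T : ∀ k ∈ 𝒦, k ⊆ T := by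
    intro k hk
    obtain ⟨y, _, rfl⟩ := Finset.mem_image.mp hk
    rintro x ⟨w, _, rfl⟩; exact w.2
  have h𝒦disj : ∀ k ∈ 𝒦, ∀ l ∈ 𝒦, k ≠ l → Disjoint k l := by
    intro k hk l hl hkl
    obtain ⟨y, _, rfl⟩ := Finset.mem_image.mp hk
    obtain ⟨z, _, rfl⟩ := Finset.mem_image.mp hl
    have : A y ≠ A z := fun h => hkl (by simp [hK, h])
    exact Set.disjoint_image_of_injective Subtype.val_injective (hAdisj y z this)
  have h𝒦sub : ∀ k ∈ 𝒦, ∃ U ∈ 𝒰, k ⊆ U := by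
    intro k hk
    obtain ⟨y, _, rfl⟩ := Finset.mem_image.mp hk
    obtain ⟨w, hwF, hyw⟩ : ∃ w ∈ F, y ∈ C w := by
      have := hF (mem_univ y)
      simpa using this
    have hCw𝒞 : C w ∈ 𝒞 := by
      simp only [h𝒞, Finset.mem_union, Finset.mem_image]
      exact Or.inl ⟨w, hwF, rfl⟩
    obtain ⟨U, hU, hCU⟩ := h𝒞sub (C w) hCw𝒞
    refine ⟨U, hU, ?_⟩
    rintro x ⟨v, hv, rfl⟩
    exact hCU (hAsub y (C w) hCw𝒞 hyw hv)
  have h𝒦each : ∀ U ∈ 𝒰, ∃ k ∈ 𝒦, k ⊆ U := by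
    intro U hU
    obtain ⟨x, hxD⟩ := (hD U hU).2.1
    have hD𝒞 : D U ∈ 𝒞 := by
      simp only [h𝒞, Finset.mem_union, Finset.mem_image]
      exact Or.inr ⟨U, hU, rfl⟩
    obtain ⟨y, hyG, hxy⟩ : ∃ y ∈ G, x ∈ A y := by
      have := hG (mem_univ x)
      simpa using this
    refine ⟨K y, Finset.mem_image_of_mem K hyG, ?_⟩
    have : A y ⊆ D U := by
      rw [← hAeq y x hxy]
      exact hAsub x (D U) hD𝒞 hxD
    rintro v ⟨w, hw, rfl⟩
    exact (hD U hU).2.2 (this hw)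
  have h𝒦cover : T ⊆ ⋃₀ (𝒦 : Set (Set X)) := by
    intro x hx
    obtain ⟨y, hyG, hxy⟩ : ∃ y ∈ G, (⟨x, hx⟩ : ↥T) ∈ A y := by
      have := hG (mem_univ (⟨x, hx⟩ : ↥T))
      simpa using this
    exact ⟨K y, Finset.mem_image_of_mem K hyG, ⟨x, hx⟩, hxy, rfl⟩
  -- separating opens
  have key : ∀ k l : Set X, ∃ p : Set X × Set X, k ∈ 𝒦 → l ∈ 𝒦 → k ≠ l →
      IsOpen p.1 ∧ IsOpen p.2 ∧ k ⊆ p.1 ∧ l ⊆ p.2 ∧ Disjoint p.1 p.2 := by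
    intro k l
    by_cases h : k ∈ 𝒦 ∧ l ∈ 𝒦 ∧ k ≠ l
    · obtain ⟨hk, hl, hkl⟩ := h
      obtain ⟨u, v, hu, hv, hku, hlv, huv⟩ :=
        SeparatedNhds.of_isCompact_isCompact (h𝒦compact k hk) (h𝒦compact l hl)
          (h𝒦disj k hk l hl hkl)
      exact ⟨(u, v), fun _ _ _ => ⟨hu, hv, hku, hlv, huv⟩⟩
    · exact ⟨(∅, ∅), fun h1 h2 h3 => absurd ⟨h1, h2, h3⟩ h⟩
  choose W hW using key
  set S : Set X → Set X := fun k =>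
    ⋂ l ∈ 𝒦, if l = k then Set.univ else (W k l).1 ∩ (W l k).2 with hS
  have hSopen : ∀ k ∈ 𝒦, IsOpen (S k) := by
    intro k hk
    apply isOpen_biInter_finset
    intro l hl
    split_ifs with h
    · exact isOpen_univ
    · exact ((hW k l hk hl (Ne.symm h)).1).inter ((hW l k hl hk h).2.1)
  have hKS : ∀ k ∈ 𝒦, k ⊆ S k := by
    intro k hk
    apply subset_iInter₂
    intro l hl
    split_ifs with h
    · exact subset_univ k
    · exact subset_inter (hW k l hk hl (Ne.symm h)).2.2.1 (hW l k hl hk h).2.2.2.1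
  have hSdisj : ∀ k ∈ 𝒦, ∀ l ∈ 𝒦, k ≠ l → Disjoint (S k) (S l) := by
    intro k hk l hl hkl
    have h1 : S k ⊆ (W k l).1 := by
      refine (biInter_subset_of_mem hl).trans ?_
      rw [if_neg (Ne.symm hkl)]
      exact inter_subset_left
    have h2 : S l ⊆ (W k l).2 := by
      refine (biInter_subset_of_mem hk).trans ?_
      rw [if_neg hkl]
      exact inter_subset_right
    exact Set.disjoint_of_subset h1 h2 (hW k l hk hl hkl).2.2.2.2
  -- final open sets
  set Q : Set X → Set X := fun k => ⋂₀ {U | U ∈ 𝒰 ∧ k ⊆ U} with hQ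
  have hQopen : ∀ k, IsOpen (Q k) := by
    intro k
    apply Set.Finite.isOpen_sInter ((𝒰.finite_toSet).subset (fun U hU => hU.1))
    exact fun U hU => hop U hU.1
  have hKQ : ∀ k, k ⊆ Q k := fun k => subset_sInter (fun U hU => hU.2)
  set O : Set X → Set X := fun k => S k ∩ Q k with hO
  have hKO : ∀ k ∈ 𝒦, k ⊆ O k := fun k hk => subset_inter (hKS k hk) (hKQ k)
  have hOopen : ∀ k ∈ 𝒦, IsOpen (O k) := fun k hk => (hSopen k hk).inter (hQopen k)
  have hOU : ∀ k, ∀ U ∈ 𝒰, k ⊆ U → O k ⊆ U := by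
    intro k U hU hkU
    exact inter_subset_right.trans (sInter_subset_of_mem ⟨hU, hkU⟩)
  set 𝒱 : Finset (Set X) := 𝒦.image O with h𝒱
  refine ⟨𝒱, ⟨?_, ?_⟩, ⟨?_, ?_⟩, ?_⟩
  · intro V hV
    obtain ⟨k, hk, rfl⟩ := Finset.mem_image.mp hV
    exact ⟨hOopen k hk, (h𝒦ne k hk).mono (hKO k hk)⟩
  · intro V hV V' hV' hne
    obtain ⟨k, hk, rfl⟩ := Finset.mem_image.mp hV
    obtain ⟨l, hl, rfl⟩ := Finset.mem_image.mp hV'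
    have hkl : k ≠ l := fun h => hne (by rw [h])
    exact (hSdisj k hk l hl hkl).mono inter_subset_left inter_subset_left
  · intro x hx
    obtain ⟨k, hk, hxk⟩ := h𝒦cover hx
    exact ⟨O k, Finset.mem_coe.mpr (Finset.mem_image_of_mem O hk), hKO k hk hxk⟩
  · intro V hV
    obtain ⟨k, hk, rfl⟩ := Finset.mem_image.mp hV
    obtain ⟨x, hxk⟩ := h𝒦ne k hk
    exact ⟨x, h𝒦T k hk hxk, hKO k hk hxk⟩
  · rintro B ⟨hBsub, hBmeet⟩
    constructor
    · intro x hx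
      obtain ⟨V, hV, hxV⟩ := hBsub hx
      obtain ⟨k, hk, rfl⟩ := Finset.mem_image.mp hV
      obtain ⟨U, hU, hkU⟩ := h𝒦sub k hk
      exact ⟨U, hU, hOU k U hU hkU hxV⟩
    · intro U hU
      obtain ⟨k, hk, hkU⟩ := h𝒦each U hU
      obtain ⟨x, hx⟩ := hBmeet (O k) (Finset.mem_image_of_mem O hk)
      exact ⟨x, hx.1, hOU k U hU hkU hx.2⟩


end Aux

/-- If `Y` is a nonempty, compact, zero-dimensional, closed subset of a Hausdorff
space `X` (i.e. an element of `CL X` which is compact and whose subspace topology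
has a basis of clopen sets), then the family of sets `⟨𝒱⟩` with `𝒱` a finite
cellular family and `Y ∈ ⟨𝒱⟩` is a local base for `CL X` at `Y`. -/
theorem stmt_0 {X : Type*} [TopologicalSpace X] [T2Space X] (Y : CL X)
    (hcomp : IsCompact Y.carrier)
    (hzd : ∀ (y : Y.carrier) (U : Set Y.carrier), IsOpen U → y ∈ U →
      ∃ V : Set Y.carrier, IsClopen V ∧ y ∈ V ∧ V ⊆ U) :
    (nhds Y).HasBasis (fun 𝒱 : Finset (Set X) => IsCellular 𝒱 ∧ Y ∈ CL.box 𝒱)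
      (fun 𝒱 => CL.box 𝒱) := by
  rw [Filter.hasBasis_iff]
  intro t
  constructor
  · intro ht
    obtain ⟨𝒰, hop, hY𝒰, hsub⟩ := exists_box_of_mem_nhds ht
    obtain ⟨𝒱, hcell, hY𝒱, h𝒱𝒰⟩ := cellular_refine Y hcomp hzd hop hY𝒰
    exact ⟨𝒱, ⟨hcell, hY𝒱⟩, h𝒱𝒰.trans hsub⟩
  · rintro ⟨𝒱, ⟨hcell, hY𝒱⟩, hsub⟩
    exact Filter.mem_of_superset
      ((box_isOpen 𝒱 (fun U hU => (hcell.1 U hU).1)).mem_nhds hY𝒱) hsub
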